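/- Let 1 ≤ d < √3 and let Δ(d) be the intersection of the three closed unit balls in ℝ² centered at c₁ = (0,0), c₂ = (d,0), c₃ = (d/2, (√3/2)·d). Then the minimal width of Δ(d) equals 1 − (1/2)·√(4 + 2d² − 2√3·d·√(4 − d²)). -/

import Mathlib

open Metric Real MeasureTheory
open scoped InnerProductSpace Pointwise ENNReal

noncomputable section

/-- The Euclidean plane. -/
abbrev E2 := EuclideanSpace ℝ (Fin 2)

/-- The point of the Euclidean plane with the given coordinates. -/
def pt (a b : ℝ) : E2 := (EuclideanSpace.equiv (Fin 2) ℝ).symm ![a, b]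

/-- The width of a set `C` in the direction of the unit vector `u`. -/
def dirWidth (C : Set E2) (u : E2) : ℝ :=
  sSup {w : ℝ | ∃ x ∈ C, ∃ y ∈ C, w = ⟪x - y, u⟫_ℝ}

/-- The minimal width of a set: the infimum of the directional widths over all
unit vectors. -/
def minWidth (C : Set E2) : ℝ :=
  sInf {w : ℝ | ∃ u : E2, ‖u‖ = 1 ∧ w = dirWidth C u}

/-- The inradius of a set. -/
def inradius (C : Set E2) : ℝ :=
  sSup {r : ℝ | 0 ≤ r ∧ ∃ c : E2, closedBall c r ⊆ C}

/-- The circumradius of a set. -/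
def circumradius (C : Set E2) : ℝ :=
  sInf {r : ℝ | 0 ≤ r ∧ ∃ c : E2, C ⊆ closedBall c r}

/-- The dual disk-polygon of a set `D`. -/
def dualDP (D : Set E2) : Set E2 := {y : E2 | ∀ x ∈ D, dist x y ≤ 1}
lemma pt0 (a b : ℝ) : pt a b 0 = a := rfl
lemma pt1 (a b : ℝ) : pt a b 1 = b := rfl
lemma sub0 (x y : E2) : (x - y) 0 = x 0 - y 0 := rfl
lemma sub1 (x y : E2) : (x - y) 1 = x 1 - y 1 := rfl
lemma add0 (x y : E2) : (x + y) 0 = x 0 + y 0 := rfl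
lemma add1 (x y : E2) : (x + y) 1 = x 1 + y 1 := rfl

lemma mem_cb (x : E2) (p q : ℝ) :
    x ∈ closedBall (pt p q) 1 ↔ (x 0 - p)^2 + (x 1 - q)^2 ≤ 1 := by
  rw [mem_closedBall, EuclideanSpace.dist_eq, Fin.sum_univ_two,
    Real.dist_eq, Real.dist_eq, sq_abs, sq_abs, pt0, pt1]
  exact Real.sqrt_le_one

lemma inner_coord (x y : E2) : ⟪x, y⟫_ℝ = x 0 * y 0 + x 1 * y 1 := by
  simp [PiLp.inner_apply, Fin.sum_univ_two, RCLike.inner_apply, conj_trivial]; ring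

lemma norm_coord (u : E2) (h : ‖u‖ = 1) : (u 0)^2 + (u 1)^2 = 1 := by
  have h1 := EuclideanSpace.norm_eq u
  rw [h] at h1
  have h2 : Real.sqrt (∑ i, ‖u i‖^2) ^ 2 = 1 := by rw [← h1]; norm_num
  rw [Real.sq_sqrt (by positivity)] at h2
  simpa [Fin.sum_univ_two, sq_abs] using h2

lemma six_dir (s a b : ℝ) (hs : s^2 = 3) (hab : a^2 + b^2 = 1) :
    s ≤ 2*a ∨ s ≤ a + s*b ∨ s ≤ s*b - a ∨ s ≤ -(2*a) ∨ s ≤ -(a + s*b) ∨ s ≤ a - s*b := by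
  by_contra hc
  push_neg at hc
  obtain ⟨h1, h2, h3, h4, h5, h6⟩ := hc
  have hq : 0 < 3 - (a + s*b)^2 := by nlinarith [mul_pos (by linarith : (0:ℝ) < s - (a+s*b)) (by linarith : (0:ℝ) < s + (a+s*b))]
  have hr : 0 < 3 - (s*b - a)^2 := by nlinarith [mul_pos (by linarith : (0:ℝ) < s - (s*b-a)) (by linarith : (0:ℝ) < s + (s*b-a))]
  have hp : 0 < 3 - 4*a^2 := by nlinarith [mul_pos (by linarith : (0:ℝ) < s - 2*a) (by linarith : (0:ℝ) < s + 2*a)]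
  nlinarith [mul_pos hq hr, sq_nonneg a, sq_nonneg b]

lemma core (d H s a b : ℝ) (hs : s^2 = 3) (hs0 : 0 ≤ s)
    (hd1 : 1 ≤ d) (hds : d < s) (hH2 : H^2 = 4 - d^2) (hH0 : 0 ≤ H)
    (hab : a^2 + b^2 = 1) (h1 : a + s*b < d) (h2 : a - s*b < d) (h3 : s ≤ 2*a) :
    d + s*H ≤ 4*a := by
  have hb2 : 3*b^2 < (d - a)^2 := by
    rcases le_or_gt 0 b with hb | hb
    · nlinarith
    · nlinarith
  have hkey : 3*H^2 < (4*a - d)^2 := by nlinarith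
  have h4ad : 0 < 4*a - d := by nlinarith
  nlinarith [mul_nonneg hs0 hH0, sq_nonneg (4*a - d - s*H)]

lemma key (d H s : ℝ) (hs : s^2 = 3) (hd1 : 1 ≤ d) (hds : d < s)
    (hH2 : H^2 = 4 - d^2) (hH0 : 0 ≤ H) :
    1 - (s*d - H)/2 ≤ (3 - d^2)/2 := by
  have h1 : 0 < s*d - d^2 + 1 := by nlinarith
  have h2 : H^2 ≤ (s*d - d^2 + 1)^2 := by nlinarith [mul_nonneg (by nlinarith : (0:ℝ) ≤ d^2 - 1) (sq_nonneg (d - s))]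
  have h3 : H ≤ s*d - d^2 + 1 := by nlinarith
  linarith

lemma scalar_facts (s d H M a b : ℝ) (hs : s^2 = 3) (hs0 : 0 ≤ s) (hd1 : 1 ≤ d)
    (hds : d < s) (hH2 : H^2 = 4 - d^2) (hH0 : 0 ≤ H) (hM : M = (s*H - d)/2)
    (hab : a^2 + b^2 = 1) :
    0 < M ∧ b ≤ 1 ∧ -1 ≤ b ∧ s*a + b ≤ 2 ∧ -2 ≤ s*a + b ∧ s*a - b ≤ 2 ∧ -2 ≤ s*a - b := by
  have hd0 : 0 < d := by linarith
  have hdd : d^2 < 3 := by nlinarith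
  have hM0 : 0 < M := by nlinarith [mul_nonneg hs0 hH0]
  have hb1 : b ≤ 1 := by nlinarith [sq_nonneg a]
  have hbn : -1 ≤ b := by nlinarith [sq_nonneg a]
  have c1 : (s*a + b)^2 ≤ 4 := by nlinarith [sq_nonneg (a - s*b), sq_nonneg a, sq_nonneg b]
  have c2 : (s*a - b)^2 ≤ 4 := by nlinarith [sq_nonneg (a + s*b), sq_nonneg a, sq_nonneg b]
  refine ⟨hM0, hb1, hbn, by nlinarith [c1], by nlinarith [c1], by nlinarith [c2], by nlinarith [c2]⟩

section
variable {s d H L M : ℝ} (hs : s^2 = 3) (hs0 : 0 ≤ s) (hd1 : 1 ≤ d) (hds : d < s)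
  (hH2 : H^2 = 4 - d^2) (hH0 : 0 ≤ H) (hL : L = (s*d - H)/2) (hM : M = (s*H - d)/2)

include hs hs0 hd1 hds hH2 hH0 hL

lemma facts : 0 < d ∧ 1 ≤ s ∧ s < 2 ∧ 1 ≤ H ∧ H ≤ s ∧ 0 ≤ L ∧ L ≤ 1 := by
  have hd0 : 0 < d := by linarith
  have hs1 : 1 ≤ s := by nlinarith
  have hss : s < 2 := by nlinarith
  have hdd : d^2 < 3 := by nlinarith
  have hH1 : 1 ≤ H := by nlinarith
  have hHs : H ≤ s := by nlinarith
  have hL0 : 0 ≤ L := by nlinarith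
  have hL1 : L ≤ 1 := by nlinarith
  exact ⟨hd0, hs1, hss, hH1, hHs, hL0, hL1⟩

lemma v3_mem : pt (d/2) (H/2) ∈
    closedBall (pt 0 0) 1 ∩ closedBall (pt d 0) 1 ∩ closedBall (pt (d/2) (s/2*d)) 1 := by
  obtain ⟨hd0, hs1, hss, hH1, hHs, hL0, hL1⟩ := facts hs hs0 hd1 hds hH2 hH0 hL
  refine ⟨⟨(mem_cb _ _ _).mpr ?_, (mem_cb _ _ _).mpr ?_⟩, (mem_cb _ _ _).mpr ?_⟩ <;>
    simp only [pt0, pt1]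
  · nlinarith
  · nlinarith
  · have e : (H/2 - s/2*d)^2 = L^2 := by rw [hL]; ring
    nlinarith [e]

lemma v1_mem : pt (s*L/2) (L/2) ∈
    closedBall (pt 0 0) 1 ∩ closedBall (pt d 0) 1 ∩ closedBall (pt (d/2) (s/2*d)) 1 := by
  obtain ⟨hd0, hs1, hss, hH1, hHs, hL0, hL1⟩ := facts hs hs0 hd1 hds hH2 hH0 hL
  refine ⟨⟨(mem_cb _ _ _).mpr ?_, (mem_cb _ _ _).mpr ?_⟩, (mem_cb _ _ _).mpr ?_⟩ <;>
    simp only [pt0, pt1]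
  · have e : (s*L/2 - 0)^2 + (L/2 - 0)^2 = L^2 := by linear_combination (L^2/4)*hs
    nlinarith [e]
  · have e : (s*L/2 - d)^2 + (L/2 - 0)^2 = 1 := by
      rw [hL]; linear_combination ((s*d - H)^2/16 - d^2/4) * hs + (1/4) * hH2
    linarith [e]
  · have e : (s*L/2 - d/2)^2 + (L/2 - s/2*d)^2 = 1 := by
      rw [hL]; linear_combination ((s*d - H)^2/16) * hs + (1/4) * hH2
    linarith [e]

lemma v2_mem : pt (d - s*L/2) (L/2) ∈
    closedBall (pt 0 0) 1 ∩ closedBall (pt d 0) 1 ∩ closedBall (pt (d/2) (s/2*d)) 1 := by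
  obtain ⟨hd0, hs1, hss, hH1, hHs, hL0, hL1⟩ := facts hs hs0 hd1 hds hH2 hH0 hL
  refine ⟨⟨(mem_cb _ _ _).mpr ?_, (mem_cb _ _ _).mpr ?_⟩, (mem_cb _ _ _).mpr ?_⟩ <;>
    simp only [pt0, pt1]
  · have e : (d - s*L/2 - 0)^2 + (L/2 - 0)^2 = 1 := by
      rw [hL]; linear_combination ((s*d - H)^2/16 - d^2/4) * hs + (1/4) * hH2
    linarith [e]
  · have e : (d - s*L/2 - d)^2 + (L/2 - 0)^2 = L^2 := by linear_combination (L^2/4)*hs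
    nlinarith [e]
  · have e : (d - s*L/2 - d/2)^2 + (L/2 - s/2*d)^2 = 1 := by
      rw [hL]; linear_combination ((s*d - H)^2/16) * hs + (1/4) * hH2
    linarith [e]
end
section
variable {s d H L M : ℝ} (hs : s^2 = 3) (hs0 : 0 ≤ s) (hd1 : 1 ≤ d) (hds : d < s)
  (hH2 : H^2 = 4 - d^2) (hH0 : 0 ≤ H) (hL : L = (s*d - H)/2) (hM : M = (s*H - d)/2)

include hs hs0 hd1 hds hH2 hH0 hL hM

lemma main_pair (u : E2) (hu : ‖u‖ = 1) :
    ∃ x ∈ closedBall (pt 0 0) 1 ∩ closedBall (pt d 0) 1 ∩ closedBall (pt (d/2) (s/2*d)) 1,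
    ∃ y ∈ closedBall (pt 0 0) 1 ∩ closedBall (pt d 0) 1 ∩ closedBall (pt (d/2) (s/2*d)) 1,
    1 - L ≤ ⟪x - y, u⟫_ℝ := by
  obtain ⟨hd0, hs1, hss, hH1, hHs, hL0, hL1⟩ := facts hs hs0 hd1 hds hH2 hH0 hL
  obtain ⟨a, ha⟩ : ∃ a, u 0 = a := ⟨_, rfl⟩
  obtain ⟨b, hb⟩ : ∃ b, u 1 = b := ⟨_, rfl⟩
  have hab : a^2 + b^2 = 1 := by rw [← ha, ← hb]; exact norm_coord u hu
  have hv3 := v3_mem hs hs0 hd1 hds hH2 hH0 hL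
  have hv1 := v1_mem hs hs0 hd1 hds hH2 hH0 hL
  have hv2 := v2_mem hs hs0 hd1 hds hH2 hH0 hL
  obtain ⟨hM0, hb1, hbn, hc1, hc2, hc3, hc4⟩ :=
    scalar_facts s d H M a b hs hs0 hd1 hds hH2 hH0 hM hab
  have hA1 : d - s*L = M := by rw [hL, hM]; linear_combination (-(d/2))*hs
  have hB1 : H - L = s*M := by rw [hL, hM]; linear_combination (-(H/2))*hs
  have hMs : M*(d + s*H) = 6 - 2*d^2 := by rw [hM]; linear_combination (H^2/2)*hs + (3/2)*hH2
  have hkey := key d H s hs hd1 hds hH2 hH0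
  have h9b : L*b ≤ L*1 := mul_le_mul_of_nonneg_left hb1 hL0
  have h9bn : L*(-1) ≤ L*b := mul_le_mul_of_nonneg_left hbn hL0
  have h91 : L*(s*a + b) ≤ L*2 := mul_le_mul_of_nonneg_left hc1 hL0
  have h92 : L*(-2) ≤ L*(s*a + b) := mul_le_mul_of_nonneg_left hc2 hL0
  have h93 : L*(s*a - b) ≤ L*2 := mul_le_mul_of_nonneg_left hc3 hL0
  have h94 : L*(-2) ≤ L*(s*a - b) := mul_le_mul_of_nonneg_left hc4 hL0
  have hLb : L*b = (s*d*b - H*b)/2 := by linear_combination b*hL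
  have esd : s^2*d^2 = 3*d^2 := by linear_combination d^2 * hs
  have tmul : ∀ X : ℝ, d ≤ X → d*d ≤ d*X := fun X hX => mul_le_mul_of_nonneg_left hX hd0.le
  rcases six_dir s a b hs hab with hm | hm | hm | hm | hm | hm
  -- Case 1 : dir 0°, s ≤ 2a
  · rcases le_or_gt d (a + s*b) with hA | hA
    · refine ⟨u, ?_, pt (s*L/2) (L/2), hv1, ?_⟩
      · refine ⟨⟨(mem_cb _ _ _).mpr ?_, (mem_cb _ _ _).mpr ?_⟩, (mem_cb _ _ _).mpr ?_⟩ <;>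
          simp only [pt0, pt1, ha, hb]
        · linarith only [hab]
        · linarith only [hab, tmul (2*a) (by linarith)]
        · linarith only [hab, tmul (a + s*b) hA, esd]
      · rw [inner_coord]; simp only [sub0, sub1, pt0, pt1, ha, hb]
        linarith only [hab, h91]
    rcases le_or_gt d (a - s*b) with hB | hB
    · refine ⟨pt (d - s*L/2) (L/2), hv2, pt d 0 - u, ?_, ?_⟩
      · refine ⟨⟨(mem_cb _ _ _).mpr ?_, (mem_cb _ _ _).mpr ?_⟩, (mem_cb _ _ _).mpr ?_⟩ <;>
          simp only [sub0, sub1, pt0, pt1, ha, hb]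
        · linarith only [hab, tmul (2*a) (by linarith)]
        · linarith only [hab]
        · linarith only [hab, tmul (a - s*b) hB, esd]
      · rw [inner_coord]; simp only [sub0, sub1, pt0, pt1, ha, hb]
        linarith only [hab, h93]
    · refine ⟨pt (d - s*L/2) (L/2), hv2, pt (s*L/2) (L/2), hv1, ?_⟩
      have hcore := core d H s a b hs hs0 hd1 hds hH2 hH0 hab hA hB hm
      have h5 : M*(d + s*H) ≤ M*(4*a) := mul_le_mul_of_nonneg_left hcore hM0.le
      have h8 : 1 - L ≤ M*a := by linarith only [h5, hMs, hkey, hL]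
      have hEq : M*a = (d - s*L/2 - s*L/2)*a + (L/2 - L/2)*b := by
        linear_combination (-a) * hA1
      rw [inner_coord]; simp only [sub0, sub1, pt0, pt1, ha, hb]
      linarith only [h8, hEq]
  -- Case 2 : dir 60°, s ≤ a + s*b
  · rcases le_or_gt d (s*b - a) with hA | hA
    · refine ⟨pt (d/2) (H/2), hv3, pt (d/2) (s/2*d) - u, ?_, ?_⟩
      · refine ⟨⟨(mem_cb _ _ _).mpr ?_, (mem_cb _ _ _).mpr ?_⟩, (mem_cb _ _ _).mpr ?_⟩ <;>
          simp only [sub0, sub1, pt0, pt1, ha, hb]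
        · linarith only [hab, tmul (a + s*b) (by linarith), esd]
        · linarith only [hab, tmul (s*b - a) hA, esd]
        · linarith only [hab]
      · rw [inner_coord]; simp only [sub0, sub1, pt0, pt1, ha, hb]
        linarith only [hab, h9b, hLb]
    rcases le_or_gt d (2*a) with hB | hB
    · refine ⟨u, ?_, pt (s*L/2) (L/2), hv1, ?_⟩
      · refine ⟨⟨(mem_cb _ _ _).mpr ?_, (mem_cb _ _ _).mpr ?_⟩, (mem_cb _ _ _).mpr ?_⟩ <;>
          simp only [pt0, pt1, ha, hb]
        · linarith only [hab]
        · linarith only [hab, tmul (2*a) hB]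
        · linarith only [hab, tmul (a + s*b) (by linarith), esd]
      · rw [inner_coord]; simp only [sub0, sub1, pt0, pt1, ha, hb]
        linarith only [hab, h91]
    · refine ⟨pt (d/2) (H/2), hv3, pt (s*L/2) (L/2), hv1, ?_⟩
      have hab' : ((a + s*b)/2)^2 + ((b - s*a)/2)^2 = 1 := by
        linear_combination ((s^2+1)/4)*hab + (1/4)*hs
      have e1 : (a + s*b)/2 + s*((b - s*a)/2) = s*b - a := by linear_combination (-(a/2))*hs
      have e2 : (a + s*b)/2 - s*((b - s*a)/2) = 2*a := by linear_combination (a/2)*hs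
      have hcore := core d H s ((a + s*b)/2) ((b - s*a)/2) hs hs0 hd1 hds hH2 hH0 hab'
        (by linarith only [e1, hA]) (by linarith only [e2, hB]) (by linarith only [hm])
      have h5 : M*(d + s*H) ≤ M*(4*((a + s*b)/2)) := mul_le_mul_of_nonneg_left hcore hM0.le
      have h8 : 1 - L ≤ M*((a + s*b)/2) := by linarith only [h5, hMs, hkey, hL]
      have hEq : M*((a + s*b)/2) = (d/2 - s*L/2)*a + (H/2 - L/2)*b := by
        linear_combination (-(a/2))*hA1 + (-(b/2))*hB1
      rw [inner_coord]; simp only [sub0, sub1, pt0, pt1, ha, hb]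
      linarith only [h8, hEq]
  -- Case 3 : dir 120°, s ≤ s*b - a
  · rcases le_or_gt d (a + s*b) with hA | hA
    · refine ⟨pt (d/2) (H/2), hv3, pt (d/2) (s/2*d) - u, ?_, ?_⟩
      · refine ⟨⟨(mem_cb _ _ _).mpr ?_, (mem_cb _ _ _).mpr ?_⟩, (mem_cb _ _ _).mpr ?_⟩ <;>
          simp only [sub0, sub1, pt0, pt1, ha, hb]
        · linarith only [hab, tmul (a + s*b) hA, esd]
        · linarith only [hab, tmul (s*b - a) (by linarith), esd]
        · linarith only [hab]
      · rw [inner_coord]; simp only [sub0, sub1, pt0, pt1, ha, hb]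
        linarith only [hab, h9b, hLb]
    rcases le_or_gt d (-(2*a)) with hB | hB
    · refine ⟨pt d 0 + u, ?_, pt (d - s*L/2) (L/2), hv2, ?_⟩
      · refine ⟨⟨(mem_cb _ _ _).mpr ?_, (mem_cb _ _ _).mpr ?_⟩, (mem_cb _ _ _).mpr ?_⟩ <;>
          simp only [add0, add1, pt0, pt1, ha, hb]
        · linarith only [hab, tmul (-(2*a)) hB]
        · linarith only [hab]
        · linarith only [hab, tmul (s*b - a) (by linarith), esd]
      · rw [inner_coord]; simp only [sub0, sub1, add0, add1, pt0, pt1, ha, hb]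
        linarith only [hab, h94]
    · refine ⟨pt (d/2) (H/2), hv3, pt (d - s*L/2) (L/2), hv2, ?_⟩
      have hab' : ((s*b - a)/2)^2 + (-(s*a + b)/2)^2 = 1 := by
        linear_combination ((s^2+1)/4)*hab + (1/4)*hs
      have e1 : (s*b - a)/2 + s*(-(s*a + b)/2) = -(2*a) := by linear_combination (-(a/2))*hs
      have e2 : (s*b - a)/2 - s*(-(s*a + b)/2) = a + s*b := by linear_combination (a/2)*hs
      have hcore := core d H s ((s*b - a)/2) (-(s*a + b)/2) hs hs0 hd1 hds hH2 hH0 hab'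
        (by linarith only [e1, hB]) (by linarith only [e2, hA]) (by linarith only [hm])
      have h5 : M*(d + s*H) ≤ M*(4*((s*b - a)/2)) := mul_le_mul_of_nonneg_left hcore hM0.le
      have h8 : 1 - L ≤ M*((s*b - a)/2) := by linarith only [h5, hMs, hkey, hL]
      have hEq : M*((s*b - a)/2) = (d/2 - (d - s*L/2))*a + (H/2 - L/2)*b := by
        linear_combination (a/2)*hA1 + (-(b/2))*hB1
      rw [inner_coord]; simp only [sub0, sub1, pt0, pt1, ha, hb]
      linarith only [h8, hEq]
  -- Case 4 : dir 180°, s ≤ -(2a)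
  · rcases le_or_gt d (s*b - a) with hA | hA
    · refine ⟨pt d 0 + u, ?_, pt (d - s*L/2) (L/2), hv2, ?_⟩
      · refine ⟨⟨(mem_cb _ _ _).mpr ?_, (mem_cb _ _ _).mpr ?_⟩, (mem_cb _ _ _).mpr ?_⟩ <;>
          simp only [add0, add1, pt0, pt1, ha, hb]
        · linarith only [hab, tmul (-(2*a)) (by linarith)]
        · linarith only [hab]
        · linarith only [hab, tmul (s*b - a) hA, esd]
      · rw [inner_coord]; simp only [sub0, sub1, add0, add1, pt0, pt1, ha, hb]
        linarith only [hab, h94]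
    rcases le_or_gt d (-(a + s*b)) with hB | hB
    · refine ⟨pt (s*L/2) (L/2), hv1, pt 0 0 - u, ?_, ?_⟩
      · refine ⟨⟨(mem_cb _ _ _).mpr ?_, (mem_cb _ _ _).mpr ?_⟩, (mem_cb _ _ _).mpr ?_⟩ <;>
          simp only [sub0, sub1, pt0, pt1, ha, hb]
        · linarith only [hab]
        · linarith only [hab, tmul (-(2*a)) (by linarith)]
        · linarith only [hab, tmul (-(a + s*b)) hB, esd]
      · rw [inner_coord]; simp only [sub0, sub1, pt0, pt1, ha, hb]
        linarith only [hab, h92]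
    · refine ⟨pt (s*L/2) (L/2), hv1, pt (d - s*L/2) (L/2), hv2, ?_⟩
      have hab' : (-a)^2 + (-b)^2 = 1 := by linear_combination hab
      have hcore := core d H s (-a) (-b) hs hs0 hd1 hds hH2 hH0 hab'
        (by linarith only [hB]) (by linarith only [hA]) (by linarith only [hm])
      have h5 : M*(d + s*H) ≤ M*(4*(-a)) := mul_le_mul_of_nonneg_left hcore hM0.le
      have h8 : 1 - L ≤ M*(-a) := by linarith only [h5, hMs, hkey, hL]
      have hEq : M*(-a) = (s*L/2 - (d - s*L/2))*a + (L/2 - L/2)*b := by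
        linear_combination a*hA1
      rw [inner_coord]; simp only [sub0, sub1, pt0, pt1, ha, hb]
      linarith only [h8, hEq]
  -- Case 5 : dir 240°, s ≤ -(a + s*b)
  · rcases le_or_gt d (-(2*a)) with hA | hA
    · refine ⟨pt (s*L/2) (L/2), hv1, pt 0 0 - u, ?_, ?_⟩
      · refine ⟨⟨(mem_cb _ _ _).mpr ?_, (mem_cb _ _ _).mpr ?_⟩, (mem_cb _ _ _).mpr ?_⟩ <;>
          simp only [sub0, sub1, pt0, pt1, ha, hb]
        · linarith only [hab]
        · linarith only [hab, tmul (-(2*a)) hA]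
        · linarith only [hab, tmul (-(a + s*b)) (by linarith), esd]
      · rw [inner_coord]; simp only [sub0, sub1, pt0, pt1, ha, hb]
        linarith only [hab, h92]
    rcases le_or_gt d (a - s*b) with hB | hB
    · refine ⟨pt (d/2) (s/2*d) + u, ?_, pt (d/2) (H/2), hv3, ?_⟩
      · refine ⟨⟨(mem_cb _ _ _).mpr ?_, (mem_cb _ _ _).mpr ?_⟩, (mem_cb _ _ _).mpr ?_⟩ <;>
          simp only [add0, add1, pt0, pt1, ha, hb]
        · linarith only [hab, tmul (-(a + s*b)) (by linarith), esd]
        · linarith only [hab, tmul (a - s*b) hB, esd]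
        · linarith only [hab]
      · rw [inner_coord]; simp only [sub0, sub1, add0, add1, pt0, pt1, ha, hb]
        linarith only [hab, h9bn, hLb]
    · refine ⟨pt (s*L/2) (L/2), hv1, pt (d/2) (H/2), hv3, ?_⟩
      have hab' : (-(a + s*b)/2)^2 + ((s*a - b)/2)^2 = 1 := by
        linear_combination ((s^2+1)/4)*hab + (1/4)*hs
      have e1 : -(a + s*b)/2 + s*((s*a - b)/2) = a - s*b := by linear_combination (a/2)*hs
      have e2 : -(a + s*b)/2 - s*((s*a - b)/2) = -(2*a) := by linear_combination (-(a/2))*hs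
      have hcore := core d H s (-(a + s*b)/2) ((s*a - b)/2) hs hs0 hd1 hds hH2 hH0 hab'
        (by linarith only [e1, hB]) (by linarith only [e2, hA]) (by linarith only [hm])
      have h5 : M*(d + s*H) ≤ M*(4*(-(a + s*b)/2)) := mul_le_mul_of_nonneg_left hcore hM0.le
      have h8 : 1 - L ≤ M*(-(a + s*b)/2) := by linarith only [h5, hMs, hkey, hL]
      have hEq : M*(-(a + s*b)/2) = (s*L/2 - d/2)*a + (L/2 - H/2)*b := by
        linear_combination (a/2)*hA1 + (b/2)*hB1
      rw [inner_coord]; simp only [sub0, sub1, pt0, pt1, ha, hb]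
      linarith only [h8, hEq]
  -- Case 6 : dir 300°, s ≤ a - s*b
  · rcases le_or_gt d (-(a + s*b)) with hA | hA
    · refine ⟨pt (d/2) (s/2*d) + u, ?_, pt (d/2) (H/2), hv3, ?_⟩
      · refine ⟨⟨(mem_cb _ _ _).mpr ?_, (mem_cb _ _ _).mpr ?_⟩, (mem_cb _ _ _).mpr ?_⟩ <;>
          simp only [add0, add1, pt0, pt1, ha, hb]
        · linarith only [hab, tmul (-(a + s*b)) hA, esd]
        · linarith only [hab, tmul (a - s*b) (by linarith), esd]
        · linarith only [hab]
      · rw [inner_coord]; simp only [sub0, sub1, add0, add1, pt0, pt1, ha, hb]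
        linarith only [hab, h9bn, hLb]
    rcases le_or_gt d (2*a) with hB | hB
    · refine ⟨pt (d - s*L/2) (L/2), hv2, pt d 0 - u, ?_, ?_⟩
      · refine ⟨⟨(mem_cb _ _ _).mpr ?_, (mem_cb _ _ _).mpr ?_⟩, (mem_cb _ _ _).mpr ?_⟩ <;>
          simp only [sub0, sub1, pt0, pt1, ha, hb]
        · linarith only [hab, tmul (2*a) hB]
        · linarith only [hab]
        · linarith only [hab, tmul (a - s*b) (by linarith), esd]
      · rw [inner_coord]; simp only [sub0, sub1, pt0, pt1, ha, hb]
        linarith only [hab, h93]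
    · refine ⟨pt (d - s*L/2) (L/2), hv2, pt (d/2) (H/2), hv3, ?_⟩
      have hab' : ((a - s*b)/2)^2 + ((s*a + b)/2)^2 = 1 := by
        linear_combination ((s^2+1)/4)*hab + (1/4)*hs
      have e1 : (a - s*b)/2 + s*((s*a + b)/2) = 2*a := by linear_combination (a/2)*hs
      have e2 : (a - s*b)/2 - s*((s*a + b)/2) = -(a + s*b) := by linear_combination (-(a/2))*hs
      have hcore := core d H s ((a - s*b)/2) ((s*a + b)/2) hs hs0 hd1 hds hH2 hH0 hab'
        (by linarith only [e1, hB]) (by linarith only [e2, hA]) (by linarith only [hm])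
      have h5 : M*(d + s*H) ≤ M*(4*((a - s*b)/2)) := mul_le_mul_of_nonneg_left hcore hM0.le
      have h8 : 1 - L ≤ M*((a - s*b)/2) := by linarith only [h5, hMs, hkey, hL]
      have hEq : M*((a - s*b)/2) = (d - s*L/2 - d/2)*a + (L/2 - H/2)*b := by
        linear_combination (-(a/2))*hA1 + (b/2)*hB1
      rw [inner_coord]; simp only [sub0, sub1, pt0, pt1, ha, hb]
      linarith only [h8, hEq]
end


set_option maxHeartbeats 1000000 in
/-- The minimal width of the regular disk-triangle `Δ(d)` equals
`1 - (1/2)√(4 + 2d² - 2√3·d·√(4 - d²))`. -/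
theorem minWidth_disk_triangle (d : ℝ) (hd1 : 1 ≤ d) (hd2 : d < Real.sqrt 3) :
    minWidth (closedBall (pt 0 0) 1 ∩ closedBall (pt d 0) 1
        ∩ closedBall (pt (d / 2) (Real.sqrt 3 / 2 * d)) 1)
      = 1 - 1 / 2 * Real.sqrt (4 + 2 * d ^ 2
          - 2 * Real.sqrt 3 * d * Real.sqrt (4 - d ^ 2)) := by
  set s := Real.sqrt 3 with hsdef
  have hs : s^2 = 3 := Real.sq_sqrt (by norm_num)
  have hs0 : 0 ≤ s := Real.sqrt_nonneg 3
  have hds : d < s := hd2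
  have hs2 : s ≤ 2 := by nlinarith
  have h4d : 0 ≤ 4 - d^2 := by nlinarith
  set H := Real.sqrt (4 - d^2) with hHdef
  have hH2 : H^2 = 4 - d^2 := Real.sq_sqrt h4d
  have hH0 : 0 ≤ H := Real.sqrt_nonneg _
  obtain ⟨L, hL⟩ : ∃ L : ℝ, L = (s*d - H)/2 := ⟨_, rfl⟩
  obtain ⟨M, hM⟩ : ∃ M : ℝ, M = (s*H - d)/2 := ⟨_, rfl⟩
  obtain ⟨hd0, hs1, hss, hH1, hHs, hL0, hL1⟩ := facts hs hs0 hd1 hds hH2 hH0 hL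
  -- rewrite the RHS
  have harg : 4 + 2*d^2 - 2*s*d*H = (s*d - H)^2 := by
    linear_combination (-(d^2))*hs - hH2
  rw [harg, Real.sqrt_sq (by linarith only [hL, hL0] : 0 ≤ s*d - H)]
  have hW : 1 - 1/2*(s*d - H) = 1 - L := by rw [hL]; ring
  rw [hW]
  -- abbreviations
  have hv3 := v3_mem hs hs0 hd1 hds hH2 hH0 hL
  have hzero : ∀ u : E2, (0:ℝ) ∈ {w : ℝ | ∃ x ∈ closedBall (pt 0 0) 1 ∩ closedBall (pt d 0) 1
      ∩ closedBall (pt (d/2) (s/2*d)) 1, ∃ y ∈ closedBall (pt 0 0) 1 ∩ closedBall (pt d 0) 1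
      ∩ closedBall (pt (d/2) (s/2*d)) 1, w = ⟪x - y, u⟫_ℝ} := by
    intro u
    exact ⟨_, hv3, _, hv3, by rw [sub_self, inner_zero_left]⟩
  have hbdd : ∀ u : E2, ‖u‖ = 1 → BddAbove {w : ℝ | ∃ x ∈ closedBall (pt 0 0) 1 ∩ closedBall (pt d 0) 1
      ∩ closedBall (pt (d/2) (s/2*d)) 1, ∃ y ∈ closedBall (pt 0 0) 1 ∩ closedBall (pt d 0) 1
      ∩ closedBall (pt (d/2) (s/2*d)) 1, w = ⟪x - y, u⟫_ℝ} := by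
    intro u hu
    refine ⟨2, ?_⟩
    rintro w ⟨x, hx, y, hy, rfl⟩
    have h1 : ⟪x - y, u⟫_ℝ ≤ ‖x - y‖ * ‖u‖ := real_inner_le_norm _ _
    have h2 : ‖x - y‖ = dist x y := (dist_eq_norm x y).symm
    have h3 : dist x y ≤ dist x (pt 0 0) + dist y (pt 0 0) := dist_triangle_right x y (pt 0 0)
    have hx1 : dist x (pt 0 0) ≤ 1 := hx.1.1
    have hy1 : dist y (pt 0 0) ≤ 1 := hy.1.1
    rw [hu, h2] at h1
    nlinarith [h1, h3, hx1, hy1, dist_nonneg (x := x) (y := y)]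
  have hu0 : ‖(pt 0 1 : E2)‖ = 1 := by
    rw [EuclideanSpace.norm_eq, Fin.sum_univ_two, pt0, pt1]
    norm_num
  have hdw : ∀ u : E2, dirWidth (closedBall (pt 0 0) 1 ∩ closedBall (pt d 0) 1
      ∩ closedBall (pt (d/2) (s/2*d)) 1) u = sSup {w : ℝ | ∃ x ∈ closedBall (pt 0 0) 1
      ∩ closedBall (pt d 0) 1 ∩ closedBall (pt (d/2) (s/2*d)) 1,
      ∃ y ∈ closedBall (pt 0 0) 1 ∩ closedBall (pt d 0) 1
      ∩ closedBall (pt (d/2) (s/2*d)) 1, w = ⟪x - y, u⟫_ℝ} := fun _ => rfl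
  have hup : dirWidth (closedBall (pt 0 0) 1 ∩ closedBall (pt d 0) 1
      ∩ closedBall (pt (d/2) (s/2*d)) 1) (pt 0 1) ≤ 1 - L := by
    rw [hdw]
    apply csSup_le ⟨0, hzero _⟩
    rintro w ⟨x, hx, y, hy, rfl⟩
    have e1 : (x 0 - 0)^2 + (x 1 - 0)^2 ≤ 1 := (mem_cb _ _ _).mp hx.1.1
    have e2 : (x 0 - d)^2 + (x 1 - 0)^2 ≤ 1 := (mem_cb _ _ _).mp hx.1.2
    have e3 : (y 0 - d/2)^2 + (y 1 - s/2*d)^2 ≤ 1 := (mem_cb _ _ _).mp hy.2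
    have hx1 : x 1 ≤ H/2 := by
      have xsq : (x 1)^2 ≤ H^2/4 := by nlinarith [e1, e2, sq_nonneg (2*(x 0) - d), hH2]
      nlinarith [xsq, hH0, hH1]
    have hy1 : s/2*d - 1 ≤ y 1 := by nlinarith [e3, sq_nonneg (y 0 - d/2)]
    rw [inner_coord]
    simp only [sub0, sub1, pt0, pt1]
    have : (x 0 - y 0) * 0 + (x 1 - y 1) * 1 = x 1 - y 1 := by ring
    rw [this]
    linarith only [hx1, hy1, hL]
  unfold minWidth
  apply le_antisymm
  · exact le_trans (csInf_le ⟨0, by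
      rintro w ⟨u, hu, rfl⟩
      rw [hdw]
      exact le_csSup (hbdd u hu) (hzero u)⟩ ⟨pt 0 1, hu0, rfl⟩) hup
  · refine le_csInf ⟨_, ⟨pt 0 1, hu0, rfl⟩⟩ ?_
    rintro w ⟨u, hu, rfl⟩
    obtain ⟨x, hx, y, hy, hval⟩ := main_pair hs hs0 hd1 hds hH2 hH0 hL hM u hu
    rw [hdw]
    exact le_trans hval (le_csSup (hbdd u hu) ⟨x, hx, y, hy, rfl⟩)
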